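/- Let T be a finite tree with an edge {u, v}, and suppose T has a minimum dominating set D such that u ∈ D or some neighbor of u inside the component T_u of T − {u,v} lies in D, and likewise v is dominated within T_v by D. Then D ∩ V(T_u) is a dominating set of T_u, D ∩ V(T_v) is a dominating set of T_v, and γ(T) = γ(T_u) + γ(T_v). -/

import Mathlib

def DominatingSet {V : Type*} (G : SimpleGraph V) (D : Set V) : Prop :=
  ∀ v ∉ D, ∃ u ∈ D, G.Adj u v

noncomputable def dominationNumber {V : Type*} (G : SimpleGraph V) : ℕ :=
  sInf {k : ℕ | ∃ D : Set V, DominatingSet G D ∧ D.ncard = k}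

open SimpleGraph

lemma domNum_exists {V : Type*} (G : SimpleGraph V) :
    ∃ D : Set V, DominatingSet G D ∧ D.ncard = dominationNumber G := by
  have hne : {k : ℕ | ∃ D : Set V, DominatingSet G D ∧ D.ncard = k}.Nonempty :=
    ⟨(Set.univ : Set V).ncard, Set.univ, fun v hv => absurd (Set.mem_univ v) hv, rfl⟩
  exact Nat.sInf_mem hne

lemma domNum_le {V : Type*} (G : SimpleGraph V) (D : Set V) (hD : DominatingSet G D) :
    dominationNumber G ≤ D.ncard := Nat.sInf_le ⟨D, hD, rfl⟩

/-- The key one-sided lemma: the trace of `D` on the `u`-side component dominates it. -/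
lemma dom_side {V : Type*} (G : SimpleGraph V) {u v : V} (huv : G.Adj u v)
    (hnr : ¬ (G.deleteEdges {s(u, v)}).Reachable u v)
    (D : Set V) (hD : DominatingSet G D)
    (hu : u ∈ D ∨ ∃ w ∈ D,
      w ∈ {x : V | (G.deleteEdges {s(u, v)}).Reachable u x} ∧ G.Adj w u) :
    DominatingSet ((G.deleteEdges {s(u, v)}).induce
        {x : V | (G.deleteEdges {s(u, v)}).Reachable u x})
      (Subtype.val ⁻¹' D) := by
  set G' := G.deleteEdges {s(u, v)} with hG'
  intro b hb
  have hbS : G'.Reachable u (b : V) := b.2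
  have hbD : (b : V) ∉ D := hb
  obtain ⟨w, hwD, hadj⟩ := hD (b : V) hbD
  by_cases hcase : s(w, (b : V)) = s(u, v)
  · -- the dominating edge is exactly {u,v}
    rw [Sym2.eq_iff] at hcase
    have hbu : (b : V) = u := by
      rcases hcase with ⟨hw, hb2⟩ | ⟨hw, hb2⟩
      · rw [hb2] at hbS; exact absurd hbS hnr
      · exact hb2
    rcases hu with huD | ⟨w', hw'D, hw'S, hadj'⟩
    · { rw [hbu] at hbD; exact absurd huD hbD }
    · have hne : s(w', u) ≠ s(u, v) := by
        intro h
        rw [Sym2.eq_iff] at h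
        rcases h with ⟨rfl, h2⟩ | ⟨rfl, h2⟩
        · exact huv.ne h2
        · exact hnr hw'S
      have hadjG' : G'.Adj w' (b : V) := by
        rw [hbu]
        exact deleteEdges_adj.mpr ⟨hadj', by simpa using hne⟩
      exact ⟨⟨w', hw'S⟩, hw'D, hadjG'⟩
  · have hadjG' : G'.Adj w (b : V) :=
      deleteEdges_adj.mpr ⟨hadj, by simpa using hcase⟩
    have hwS : G'.Reachable u w := hbS.trans hadjG'.symm.reachable
    exact ⟨⟨w, hwS⟩, hwD, hadjG'⟩

theorem free_edge_domination_split {V : Type*} [Fintype V]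
    (G : SimpleGraph V) (hT : G.IsTree) {u v : V} (huv : G.Adj u v)
    (D : Set V) (hD : DominatingSet G D) (hmin : D.ncard = dominationNumber G)
    (hu : u ∈ D ∨ ∃ w ∈ D,
      w ∈ {x : V | (G.deleteEdges {s(u, v)}).Reachable u x} ∧ G.Adj w u)
    (hv : v ∈ D ∨ ∃ w ∈ D,
      w ∈ {x : V | (G.deleteEdges {s(u, v)}).Reachable v x} ∧ G.Adj w v) :
    DominatingSet ((G.deleteEdges {s(u, v)}).induce
        {x : V | (G.deleteEdges {s(u, v)}).Reachable u x})
      (Subtype.val ⁻¹' D) ∧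
    DominatingSet ((G.deleteEdges {s(u, v)}).induce
        {x : V | (G.deleteEdges {s(u, v)}).Reachable v x})
      (Subtype.val ⁻¹' D) ∧
    dominationNumber G =
      dominationNumber ((G.deleteEdges {s(u, v)}).induce
        {x : V | (G.deleteEdges {s(u, v)}).Reachable u x}) +
      dominationNumber ((G.deleteEdges {s(u, v)}).induce
        {x : V | (G.deleteEdges {s(u, v)}).Reachable v x}) := by
  classical
  set G' := G.deleteEdges {s(u, v)} with hG'
  set Su : Set V := {x : V | G'.Reachable u x} with hSu
  set Sv : Set V := {x : V | G'.Reachable v x} with hSv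
  -- the edge is a bridge
  have hbr : ¬ G'.Reachable u v := by
    have hb : G.IsBridge s(u, v) :=
      (isAcyclic_iff_forall_adj_isBridge.mp hT.IsAcyclic) huv
    exact isBridge_iff.mp hb
  have hbr' : ¬ G'.Reachable v u := fun h => hbr h.symm
  -- swapping the edge for the symmetric application
  have hswap : G.deleteEdges {s(v, u)} = G' := by rw [hG', Sym2.eq_swap]
  have hdomu : DominatingSet (G'.induce Su) (Subtype.val ⁻¹' D) :=
    dom_side G huv hbr D hD hu
  have hdomv : DominatingSet (G'.induce Sv) (Subtype.val ⁻¹' D) := by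
    have := dom_side G huv.symm (by rw [hswap]; exact hbr') D hD (by rw [hswap]; exact hv)
    rwa [hswap] at this
  refine ⟨hdomu, hdomv, ?_⟩
  -- every vertex is on one of the two sides
  have hcover : ∀ x : V, x ∈ Su ∨ x ∈ Sv := by
    intro x
    have hstep : ∀ {a b : V}, G.Walk a b → (a ∈ Su ∨ a ∈ Sv) → (b ∈ Su ∨ b ∈ Sv) := by
      intro a b p
      induction p with
      | nil => exact id
      | cons h p ih =>
        rename_i a c b
        intro ha
        by_cases hc : s(a, c) = s(u, v)
        · rw [Sym2.eq_iff] at hc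
          refine ih ?_
          rcases hc with ⟨rfl, rfl⟩ | ⟨rfl, rfl⟩
          · exact Or.inr (Reachable.refl _)
          · exact Or.inl (Reachable.refl _)
        · have hadj : G'.Adj a c := by
            rw [hG', deleteEdges_adj]; exact ⟨h, by simpa using hc⟩
          exact ih (ha.imp (fun h' => h'.trans hadj.reachable)
            (fun h' => h'.trans hadj.reachable))
    obtain ⟨p⟩ := hT.isConnected.preconnected u x
    exact hstep p (Or.inl (Reachable.refl _))
  have hdisj : Disjoint Su Sv := by
    rw [Set.disjoint_left]
    intro x hxu hxv
    exact hbr (Reachable.trans hxu (Reachable.symm hxv))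
  -- cardinality bookkeeping
  have hcardu : (Subtype.val ⁻¹' D : Set Su).ncard = (D ∩ Su).ncard := by
    rw [← Set.ncard_image_of_injective _ Subtype.val_injective,
      Subtype.image_preimage_coe, Set.inter_comm]
  have hcardv : (Subtype.val ⁻¹' D : Set Sv).ncard = (D ∩ Sv).ncard := by
    rw [← Set.ncard_image_of_injective _ Subtype.val_injective,
      Subtype.image_preimage_coe, Set.inter_comm]
  have hsplit : D.ncard = (D ∩ Su).ncard + (D ∩ Sv).ncard := by
    rw [← Set.ncard_union_eq (hdisj.mono Set.inter_subset_right Set.inter_subset_right)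
      (Set.toFinite _) (Set.toFinite _)]
    congr 1
    rw [← Set.inter_union_distrib_left]
    have : Su ∪ Sv = Set.univ := by
      ext x; simpa using hcover x
    rw [this, Set.inter_univ]
  -- ≥ direction: sum of side domination numbers ≤ γ(G)
  have hge : dominationNumber (G'.induce Su) + dominationNumber (G'.induce Sv)
      ≤ dominationNumber G := by
    calc dominationNumber (G'.induce Su) + dominationNumber (G'.induce Sv)
        ≤ (Subtype.val ⁻¹' D : Set Su).ncard + (Subtype.val ⁻¹' D : Set Sv).ncard :=
          Nat.add_le_add (domNum_le _ _ hdomu) (domNum_le _ _ hdomv)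
      _ = D.ncard := by rw [hcardu, hcardv, ← hsplit]
      _ = dominationNumber G := hmin
  -- ≤ direction: combine minimum dominating sets of the two sides
  have hle : dominationNumber G
      ≤ dominationNumber (G'.induce Su) + dominationNumber (G'.induce Sv) := by
    obtain ⟨A, hA, hAcard⟩ := domNum_exists (G'.induce Su)
    obtain ⟨B, hB, hBcard⟩ := domNum_exists (G'.induce Sv)
    set C : Set V := (Subtype.val '' A) ∪ (Subtype.val '' B) with hC
    have hCdom : DominatingSet G C := by
      intro x hx
      rcases hcover x with hxu | hxv
      · by_cases hxA : (⟨x, hxu⟩ : Su) ∈ A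
        · exact absurd (Or.inl ⟨⟨x, hxu⟩, hxA, rfl⟩) hx
        · obtain ⟨a, haA, hadj⟩ := hA ⟨x, hxu⟩ hxA
          exact ⟨(a : V), Or.inl ⟨a, haA, rfl⟩, (deleteEdges_le _) hadj⟩
      · by_cases hxB : (⟨x, hxv⟩ : Sv) ∈ B
        · exact absurd (Or.inr ⟨⟨x, hxv⟩, hxB, rfl⟩) hx
        · obtain ⟨a, haB, hadj⟩ := hB ⟨x, hxv⟩ hxB
          exact ⟨(a : V), Or.inr ⟨a, haB, rfl⟩, (deleteEdges_le _) hadj⟩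
    calc dominationNumber G ≤ C.ncard := domNum_le _ _ hCdom
      _ ≤ (Subtype.val '' A).ncard + (Subtype.val '' B).ncard :=
          Set.ncard_union_le _ _
      _ = A.ncard + B.ncard := by
          rw [Set.ncard_image_of_injective _ Subtype.val_injective,
            Set.ncard_image_of_injective _ Subtype.val_injective]
      _ = _ := by rw [hAcard, hBcard]
  exact le_antisymm hle hge
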